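/- Let V be a pseudovariety of finite groups, G a group, and H a subgroup of G of finite index. If H is closed in the pro-V topology on G, then H is open in the pro-V topology on G. -/

import Mathlib

universe u

open Topology Pointwise

/-- The pro-`V` topology on a group `G`: the topology generated by the cosets of
the normal subgroups `K` of `G` with `G/K ∈ V`. -/
def proVTopology (G : Type u) [Group G] (V : (H : Type u) → [inst : Group H] → Prop) :
    TopologicalSpace G :=
  TopologicalSpace.generateFrom
    {S : Set G | ∃ (K : Subgroup G) (_ : K.Normal),
      V (G ⧸ K) ∧ ∃ g : G, S = (g * ·) '' (K : Set G)}

/-- Auxiliary: a pseudovariety is closed under intersections of kernels. -/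
theorem proV_inf {G : Type u} [Group G] (V : (H : Type u) → [inst : Group H] → Prop)
    (hsub : ∀ (H : Type u) [Group H] (K : Subgroup H), V H → V K)
    (hquot : ∀ (H K : Type u) [Group H] [Group K] (f : H →* K),
      Function.Surjective f → V H → V K)
    (hprod : ∀ (H K : Type u) [Group H] [Group K], V H → V K → V (H × K))
    (K₁ K₂ : Subgroup G) [K₁.Normal] [K₂.Normal]
    (v₁ : V (G ⧸ K₁)) (v₂ : V (G ⧸ K₂)) : V (G ⧸ (K₁ ⊓ K₂)) := by
  set f : G →* (G ⧸ K₁) × (G ⧸ K₂) := (QuotientGroup.mk' K₁).prod (QuotientGroup.mk' K₂)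
    with hf
  have hker : f.ker = K₁ ⊓ K₂ := by
    rw [hf, MonoidHom.ker_prod, QuotientGroup.ker_mk', QuotientGroup.ker_mk']
  have hVrange : V f.range := hsub _ f.range (hprod _ _ v₁ v₂)
  have e : (G ⧸ f.ker) ≃* f.range := QuotientGroup.quotientKerEquivRange f
  have hv : V (G ⧸ f.ker) := hquot _ _ e.symm.toMonoidHom e.symm.surjective hVrange
  have e' : (G ⧸ f.ker) ≃* (G ⧸ (K₁ ⊓ K₂)) := QuotientGroup.quotientMulEquivOfEq hker
  exact hquot _ _ e'.toMonoidHom e'.surjective hv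

/-- For a pseudovariety `V` of finite groups, a finite-index
subgroup of a group `G` that is closed in the pro-`V` topology is open in the
pro-`V` topology. -/
theorem closed_finite_index_subgroup_isOpen_proV (G : Type u) [Group G]
    (V : (H : Type u) → [inst : Group H] → Prop)
    (hfin : ∀ (H : Type u) [Group H], V H → Finite H)
    (hsub : ∀ (H : Type u) [Group H] (K : Subgroup H), V H → V K)
    (hquot : ∀ (H K : Type u) [Group H] [Group K] (f : H →* K),
      Function.Surjective f → V H → V K)
    (hprod : ∀ (H K : Type u) [Group H] [Group K], V H → V K → V (H × K))
    (H : Subgroup G) (hindex : H.index ≠ 0)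
    (hclosed : IsClosed[proVTopology G V] (H : Set G)) :
    IsOpen[proVTopology G V] (H : Set G) := by
  classical
  set 𝒮 : Set (Set G) := {S : Set G | ∃ (K : Subgroup G) (_ : K.Normal),
      V (G ⧸ K) ∧ ∃ g : G, S = (g * ·) '' (K : Set G)} with h𝒮
  have hcompl : TopologicalSpace.GenerateOpen 𝒮 (↑H)ᶜ := hclosed.isOpen_compl
  by_cases hV : V (G ⧸ (⊤ : Subgroup G))
  · -- point criterion for open sets
    have key : ∀ U : Set G, TopologicalSpace.GenerateOpen 𝒮 U → ∀ g ∈ U,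
        ∃ K : Subgroup G, ∃ _ : K.Normal, V (G ⧸ K) ∧ (g * ·) '' (K : Set G) ⊆ U := by
      intro U hU
      induction hU with
      | basic S hS =>
        intro g hg
        obtain ⟨K, hN, hVK, a, rfl⟩ := hS
        obtain ⟨k, hk, rfl⟩ := hg
        refine ⟨K, hN, hVK, ?_⟩
        rintro x ⟨k', hk', rfl⟩
        exact ⟨k * k', K.mul_mem hk hk', (mul_assoc a k k').symm⟩
      | univ =>
        intro g _
        exact ⟨⊤, inferInstance, hV, fun x _ => trivial⟩
      | inter U₁ U₂ h₁ h₂ ih₁ ih₂ =>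
        intro g hg
        obtain ⟨K₁, n₁, v₁, s₁⟩ := ih₁ g hg.1
        obtain ⟨K₂, n₂, v₂, s₂⟩ := ih₂ g hg.2
        haveI := n₁; haveI := n₂
        refine ⟨K₁ ⊓ K₂, inferInstance, proV_inf V hsub hquot hprod K₁ K₂ v₁ v₂, ?_⟩
        rintro x ⟨k, hk, rfl⟩
        exact ⟨s₁ ⟨k, hk.1, rfl⟩, s₂ ⟨k, hk.2, rfl⟩⟩
      | sUnion S hS ih =>
        intro g hg
        obtain ⟨U, hU, hgU⟩ := hg
        obtain ⟨K, n, v, s⟩ := ih U hU g hgU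
        exact ⟨K, n, v, s.trans (Set.subset_sUnion_of_mem hU)⟩
    -- finiteness of subgroups containing H
    have hfinq : Finite (G ⧸ H) := Nat.finite_of_card_ne_zero hindex
    have hfinL : Set.Finite {L : Subgroup G | H ≤ L} := by
      have hinj : Set.InjOn (fun L : Subgroup G => (QuotientGroup.mk '' (L : Set G) : Set (G ⧸ H)))
          {L : Subgroup G | H ≤ L} := by
        intro L₁ hL₁ L₂ hL₂ hEq
        have hle : ∀ A B : Subgroup G, H ≤ B →
            (QuotientGroup.mk '' (A : Set G) : Set (G ⧸ H)) = QuotientGroup.mk '' (B : Set G) →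
            A ≤ B := by
          intro A B hB hAB g hg
          have : (QuotientGroup.mk g : G ⧸ H) ∈ (QuotientGroup.mk '' (B : Set G) : Set (G ⧸ H)) :=
            hAB ▸ ⟨g, hg, rfl⟩
          obtain ⟨b, hb, hbg⟩ := this
          have hbH : b⁻¹ * g ∈ H := (QuotientGroup.eq (s := H)).mp hbg
          have hbB : b⁻¹ * g ∈ B := hB hbH
          simpa using B.mul_mem hb hbB
        exact le_antisymm (hle L₁ L₂ hL₂ hEq) (hle L₂ L₁ hL₁ hEq.symm)
      exact Set.Finite.of_finite_image (Set.toFinite _) hinj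
    set F : Set (Subgroup G) := {L | ∃ K : Subgroup G, ∃ _ : K.Normal, V (G ⧸ K) ∧ L = H ⊔ K}
      with hF
    have hFsub : F ⊆ {L : Subgroup G | H ≤ L} := by
      rintro L ⟨K, -, -, rfl⟩
      exact Set.mem_setOf_eq ▸ le_sup_left
    have hFfin : F.Finite := hfinL.subset hFsub
    have hFne : F.Nonempty := ⟨⊤, ⊤, inferInstance, hV, (sup_top_eq H).symm⟩
    obtain ⟨L₀, hL₀F, hmin⟩ := Set.Finite.exists_minimalFor id F hFfin hFne
    obtain ⟨K₀, n₀, v₀, hL₀⟩ := hL₀F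
    haveI := n₀
    -- L₀ = H ⊔ K₀ is contained in H
    have hL₀le : L₀ ≤ H := by
      intro g hg
      by_contra hgH
      obtain ⟨K, n, v, s⟩ := key (↑H)ᶜ hcompl g hgH
      haveI := n
      have hmem : H ⊔ (K₀ ⊓ K) ∈ F :=
        ⟨K₀ ⊓ K, inferInstance, proV_inf V hsub hquot hprod K₀ K v₀ v, rfl⟩
      have hle : H ⊔ (K₀ ⊓ K) ≤ L₀ := hL₀ ▸ sup_le_sup_left inf_le_left H
      have hEq : L₀ = H ⊔ (K₀ ⊓ K) := le_antisymm (hmin hmem hle) hle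
      have hgK : g ∈ H ⊔ K :=
        (sup_le_sup_left inf_le_right H : H ⊔ (K₀ ⊓ K) ≤ H ⊔ K) (hEq ▸ hg)
      have hgmul : g ∈ ((H : Set G) * (K : Set G)) := by
        rw [← Subgroup.mul_normal]; exact hgK
      rw [Set.mem_mul] at hgmul
      obtain ⟨h, hh, k, hk, hhk⟩ := hgmul
      have : h ∈ ((g * ·) '' (K : Set G)) := ⟨k⁻¹, K.inv_mem hk, by rw [← hhk]; group⟩
      exact s this hh
    have hK₀le : K₀ ≤ H := le_trans (le_trans le_sup_right (le_of_eq hL₀.symm)) hL₀le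
    -- H is the union of cosets of K₀
    have hHunion : (H : Set G) = ⋃ h ∈ (H : Set G), (h * ·) '' (K₀ : Set G) := by
      ext x
      simp only [Set.mem_iUnion, Set.mem_image, SetLike.mem_coe, exists_prop]
      constructor
      · intro hx; exact ⟨x, hx, 1, K₀.one_mem, mul_one x⟩
      · rintro ⟨h, hh, k, hk, rfl⟩
        exact H.mul_mem hh (hK₀le hk)
    show TopologicalSpace.GenerateOpen 𝒮 (H : Set G)
    rw [hHunion, ← Set.sUnion_image]
    refine TopologicalSpace.GenerateOpen.sUnion _ ?_
    rintro _ ⟨h, hh, rfl⟩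
    exact TopologicalSpace.GenerateOpen.basic _ ⟨K₀, n₀, v₀, h, rfl⟩
  · -- V contains no quotient of G at all, so the topology is indiscrete
    have h𝒮empty : 𝒮 = ∅ := by
      ext S
      simp only [h𝒮, Set.mem_setOf_eq, Set.mem_empty_iff_false, iff_false]
      rintro ⟨K, n, v, g, rfl⟩
      haveI := n
      haveI : Subsingleton (G ⧸ (⊤ : Subgroup G)) := QuotientGroup.subsingleton_quotient_top
      refine hV (hquot (G ⧸ K) (G ⧸ (⊤ : Subgroup G)) 1 ?_ v)
      intro y; exact ⟨1, Subsingleton.elim _ _⟩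
    have hindis : ∀ U : Set G, TopologicalSpace.GenerateOpen 𝒮 U → U = ∅ ∨ U = Set.univ := by
      intro U hU
      induction hU with
      | basic S hS => rw [h𝒮empty] at hS; exact absurd hS (Set.notMem_empty S)
      | univ => exact Or.inr rfl
      | inter U₁ U₂ h₁ h₂ ih₁ ih₂ =>
        rcases ih₁ with rfl | rfl
        · exact Or.inl (by simp)
        · rcases ih₂ with rfl | rfl
          · exact Or.inl (by simp)
          · exact Or.inr (by simp)
      | sUnion S hS ih =>
        by_cases hu : Set.univ ∈ S
        · exact Or.inr (Set.eq_univ_of_univ_subset (Set.subset_sUnion_of_mem hu))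
        · left
          refine Set.eq_empty_iff_forall_notMem.mpr ?_
          rintro x ⟨U, hU, hxU⟩
          rcases ih U hU with rfl | rfl
          · exact hxU
          · exact hu hU
    rcases hindis _ hcompl with h0 | h1
    · have huniv : (H : Set G) = Set.univ := by
        rw [← Set.compl_empty, ← h0, compl_compl]
      show TopologicalSpace.GenerateOpen 𝒮 (H : Set G)
      rw [huniv]; exact TopologicalSpace.GenerateOpen.univ
    · exact absurd (h1 ▸ Set.mem_univ (1 : G)) (by simp [H.one_mem])
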